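/- Let k be an odd positive integer and let k = r_1 + r_2 + ... + r_t where r_i ≥ 2 for every i with 1 ≤ i ≤ t. Then the set {1, 2, ..., k} can be partitioned into pairwise disjoint subsets D_1, D_2, ..., D_t whose union is {1, ..., k}, such that for every i with 1 ≤ i ≤ t, |D_i| = r_i and the sum of the elements of D_i is congruent to 0 modulo k. -/
import Mathlib

open Finset

namespace ZSP

def pc (r : ℕ → ℕ) (i : ℕ) : ℕ := r i / 2 - r i % 2
def P (r : ℕ → ℕ) (i : ℕ) : ℕ := ∑ j ∈ Finset.Icc 1 i, pc r j
def q (r : ℕ → ℕ) (i : ℕ) : ℕ := ((Finset.Icc 1 i).filter (fun j => r j % 2 = 1)).card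

variable {r : ℕ → ℕ} {i j t : ℕ}

lemma P_mono (r : ℕ → ℕ) (h : i ≤ j) : P r i ≤ P r j :=
  Finset.sum_le_sum_of_subset (Finset.Icc_subset_Icc_right h)

lemma P_step (r : ℕ → ℕ) (h : 1 ≤ i) : P r i = P r (i-1) + pc r i := by
  unfold P
  obtain ⟨b, rfl⟩ : ∃ b, i = b + 1 := ⟨i - 1, by omega⟩
  rw [Finset.sum_Icc_succ_top (by omega)]
  simp

lemma q_mono (r : ℕ → ℕ) (h : i ≤ j) : q r i ≤ q r j :=
  Finset.card_le_card (Finset.filter_subset_filter _ (Finset.Icc_subset_Icc_right h))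

lemma q_pos (r : ℕ → ℕ) (h1 : 1 ≤ i) (h : r i % 2 = 1) : 1 ≤ q r i := by
  apply Finset.card_pos.mpr
  exact ⟨i, by simp [Finset.mem_filter, Finset.mem_Icc]; omega⟩

lemma q_lt (r : ℕ → ℕ) (hij : i < j) (hj : r j % 2 = 1) : q r i < q r j := by
  have h2 : j ∉ (Finset.Icc 1 i).filter (fun a => r a % 2 = 1) := by
    simp [Finset.mem_filter, Finset.mem_Icc]; omega
  have h1 : insert j ((Finset.Icc 1 i).filter (fun a => r a % 2 = 1)) ⊆
      (Finset.Icc 1 j).filter (fun a => r a % 2 = 1) := by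
    intro a ha
    simp only [Finset.mem_insert, Finset.mem_filter, Finset.mem_Icc] at ha ⊢
    rcases ha with rfl | ⟨⟨h3, h4⟩, h5⟩
    · exact ⟨⟨by omega, le_refl _⟩, hj⟩
    · exact ⟨⟨h3, by omega⟩, h5⟩
  calc q r i < (insert j ((Finset.Icc 1 i).filter (fun a => r a % 2 = 1))).card := by
        rw [Finset.card_insert_of_notMem h2]; exact Nat.lt_succ_self _
    _ ≤ _ := Finset.card_le_card h1

lemma sum_mod_eq_q (r : ℕ → ℕ) (t : ℕ) : ∑ i ∈ Finset.Icc 1 t, r i % 2 = q r t := by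
  rw [q, Finset.card_filter]
  exact Finset.sum_congr rfl (fun x _ => by split_ifs with h <;> omega)

lemma q_le (r : ℕ → ℕ) (t : ℕ) : q r t ≤ t := by
  calc q r t ≤ (Finset.Icc 1 t).card := Finset.card_filter_le _ _
    _ = t := by rw [Nat.card_Icc]; omega

lemma key_counts (r : ℕ → ℕ) (t k : ℕ) (hr : ∀ i ∈ Finset.Icc 1 t, 2 ≤ r i)
    (hsum : k = ∑ i ∈ Finset.Icc 1 t, r i) :
    q r t % 2 = k % 2 ∧ 3 * q r t ≤ k ∧ 2 * P r t + 3 * q r t = k := by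
  have h1 := sum_mod_eq_q r t
  have h2 : (∑ i ∈ Finset.Icc 1 t, r i) % 2 = (∑ i ∈ Finset.Icc 1 t, r i % 2) % 2 :=
    Finset.sum_nat_mod _ _ _
  have h3 : ∀ i ∈ Finset.Icc 1 t, 2 + r i % 2 ≤ r i := fun i hi => by
    have := hr i hi; omega
  have h4 : ∑ i ∈ Finset.Icc 1 t, (2 + r i % 2) ≤ ∑ i ∈ Finset.Icc 1 t, r i :=
    Finset.sum_le_sum h3
  have h5 : ∑ i ∈ Finset.Icc 1 t, (2 + r i % 2) = 2 * t + q r t := by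
    rw [Finset.sum_add_distrib, h1, Finset.sum_const, Nat.card_Icc, smul_eq_mul]
    omega
  have h6 := q_le r t
  have h7 : ∀ i ∈ Finset.Icc 1 t, 2 * pc r i + 3 * (r i % 2) = r i := fun i hi => by
    have := hr i hi; unfold pc; omega
  have h8 : ∑ i ∈ Finset.Icc 1 t, (2 * pc r i + 3 * (r i % 2)) = ∑ i ∈ Finset.Icc 1 t, r i :=
    Finset.sum_congr rfl h7
  rw [Finset.sum_add_distrib, ← Finset.mul_sum, ← Finset.mul_sum, h1] at h8
  have h9 : 2 * P r t + 3 * q r t = k := by rw [P]; omega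
  exact ⟨by omega, by omega, h9⟩

def trip (k s n : ℕ) : Finset ℕ :=
  if n = 1 then {k/2, k/2+1, k}
  else if n % 2 = 0 then {n/2, s + n/2, k - s - n}
  else {k - s - 1 + n/2, k + 2 - s - n, 2*s + n/2}

lemma mem_trip {k s n a : ℕ} :
    a ∈ trip k s n ↔
      (n = 1 ∧ (a = k/2 ∨ a = k/2+1 ∨ a = k)) ∨
      (n ≠ 1 ∧ n % 2 = 0 ∧ (a = n/2 ∨ a = s + n/2 ∨ a = k - s - n)) ∨
      (n ≠ 1 ∧ n % 2 = 1 ∧ (a = k - s - 1 + n/2 ∨ a = k + 2 - s - n ∨ a = 2*s + n/2)) := by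
  unfold trip
  split_ifs with h1 h2
  · simp only [Finset.mem_insert, Finset.mem_singleton]
    constructor
    · intro h; exact Or.inl ⟨h1, h⟩
    · rintro (⟨_, h⟩ | ⟨h, _⟩ | ⟨h, _⟩) <;> first | exact h | exact absurd h1 h
  · simp only [Finset.mem_insert, Finset.mem_singleton]
    constructor
    · intro h; exact Or.inr (Or.inl ⟨h1, h2, h⟩)
    · rintro (⟨h, _⟩ | ⟨_, _, h⟩ | ⟨_, h, _⟩) <;> first | exact h | omega
  · simp only [Finset.mem_insert, Finset.mem_singleton]
    constructor
    · intro h; exact Or.inr (Or.inr ⟨h1, by omega, h⟩)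
    · rintro (⟨h, _⟩ | ⟨_, h, _⟩ | ⟨_, _, h⟩) <;> first | exact h | omega

lemma card3 {x y z : ℕ} (hxy : x ≠ y) (hxz : x ≠ z) (hyz : y ≠ z) :
    ({x, y, z} : Finset ℕ).card = 3 := by
  rw [Finset.card_insert_of_notMem (by simp [hxy, hxz]),
    Finset.card_insert_of_notMem (by simp [hyz]), Finset.card_singleton]

lemma sum3 {x y z : ℕ} (hxy : x ≠ y) (hxz : x ≠ z) (hyz : y ≠ z) :
    (∑ a ∈ ({x, y, z} : Finset ℕ), a) = x + y + z := by
  rw [Finset.sum_insert (by simp [hxy, hxz]), Finset.sum_pair hyz]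
  ring

variable {k s n n' : ℕ}

lemma trip_subset (hko : k % 2 = 1) (hm : 3*s+1 ≤ k/2) (hn1 : 1 ≤ n) (hn2 : n ≤ 2*s+1) :
    trip k s n ⊆ Finset.Icc 1 k := by
  intro a ha
  rw [mem_trip] at ha
  rw [Finset.mem_Icc]
  omega

lemma trip_card (hko : k % 2 = 1) (hm : 3*s+1 ≤ k/2) (hn1 : 1 ≤ n) (hn2 : n ≤ 2*s+1) :
    (trip k s n).card = 3 := by
  unfold trip
  split_ifs with h1 h2
  · exact card3 (by omega) (by omega) (by omega)
  · exact card3 (by omega) (by omega) (by omega)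
  · exact card3 (by omega) (by omega) (by omega)

lemma trip_sum (hko : k % 2 = 1) (hm : 3*s+1 ≤ k/2) (hn1 : 1 ≤ n) (hn2 : n ≤ 2*s+1) :
    (∑ a ∈ trip k s n, a) % k = 0 := by
  unfold trip
  split_ifs with h1 h2
  · rw [sum3 (by omega) (by omega) (by omega)]
    have h : k/2 + (k/2+1) + k = 2 * k := by omega
    rw [h]
    exact Nat.mul_mod_left 2 k
  · rw [sum3 (by omega) (by omega) (by omega)]
    have h : n/2 + (s + n/2) + (k - s - n) = k := by omega
    rw [h, Nat.mod_self]
  · rw [sum3 (by omega) (by omega) (by omega)]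
    have h : (k - s - 1 + n/2) + (k + 2 - s - n) + (2*s + n/2) = 2 * k := by omega
    rw [h]
    exact Nat.mul_mod_left 2 k

lemma trip_disjoint (hko : k % 2 = 1) (hm : 3*s+1 ≤ k/2) (hn1 : 1 ≤ n) (hn2 : n ≤ 2*s+1)
    (hn1' : 1 ≤ n') (hn2' : n' ≤ 2*s+1) (hne : n ≠ n') :
    Disjoint (trip k s n) (trip k s n') := by
  rw [Finset.disjoint_left]
  intro a ha ha'
  rw [mem_trip] at ha ha'
  omega

lemma trip_pair_disjoint {x : ℕ} (hko : k % 2 = 1) (hm : 3*s+1 ≤ k/2) (hn1 : 1 ≤ n)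
    (hn2 : n ≤ 2*s+1) (hx1 : 3*s+1 ≤ x) (hx2 : x ≤ k/2 - 1) :
    Disjoint (trip k s n) ({x, k - x} : Finset ℕ) := by
  rw [Finset.disjoint_left]
  intro a ha ha'
  rw [mem_trip] at ha
  simp only [Finset.mem_insert, Finset.mem_singleton] at ha'
  omega

def D (k s : ℕ) (r : ℕ → ℕ) (i : ℕ) : Finset ℕ :=
  (if r i % 2 = 1 then trip k s (q r i) else ∅) ∪
    (Finset.Icc (3*s + P r (i-1) + 1) (3*s + P r i)).biUnion (fun x => ({x, k - x} : Finset ℕ))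

section
variable {k s t i j : ℕ} {r : ℕ → ℕ}

lemma D_subset (hko : k % 2 = 1) (hm : 3*s+1 ≤ k/2) (hqt : q r t = 2*s+1)
    (hPt : 2 * P r t + 6*s + 3 = k) (hi : i ∈ Finset.Icc 1 t) :
    D k s r i ⊆ Finset.Icc 1 k := by
  have hi' := Finset.mem_Icc.mp hi
  apply Finset.union_subset
  · split_ifs with h
    · exact trip_subset hko hm (q_pos r hi'.1 h) (hqt ▸ q_mono r hi'.2)
    · simp
  · apply Finset.biUnion_subset.mpr
    intro x hx
    have hx' := Finset.mem_Icc.mp hx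
    have hub : P r i ≤ P r t := P_mono r hi'.2
    intro a ha
    simp only [Finset.mem_insert, Finset.mem_singleton] at ha
    rw [Finset.mem_Icc]
    omega

lemma D_card (hko : k % 2 = 1) (hm : 3*s+1 ≤ k/2) (hqt : q r t = 2*s+1)
    (hPt : 2 * P r t + 6*s + 3 = k) (hr2 : 2 ≤ r i) (hi : i ∈ Finset.Icc 1 t) :
    (D k s r i).card = r i := by
  have hi' := Finset.mem_Icc.mp hi
  have hub : P r i ≤ P r t := P_mono r hi'.2
  have hdisj : Disjoint (if r i % 2 = 1 then trip k s (q r i) else ∅)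
      ((Finset.Icc (3*s + P r (i-1) + 1) (3*s + P r i)).biUnion fun x => ({x, k - x} : Finset ℕ)) := by
    split_ifs with h
    · apply (Finset.disjoint_biUnion_right _ _ _).mpr
      intro x hx
      have hx' := Finset.mem_Icc.mp hx
      exact trip_pair_disjoint hko hm (q_pos r hi'.1 h) (hqt ▸ q_mono r hi'.2) (by omega) (by omega)
    · simp
  rw [D, Finset.card_union_of_disjoint hdisj]
  have hpair : ∀ x ∈ Finset.Icc (3*s + P r (i-1) + 1) (3*s + P r i),
      ∀ y ∈ Finset.Icc (3*s + P r (i-1) + 1) (3*s + P r i), x ≠ y →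
      Disjoint ({x, k - x} : Finset ℕ) ({y, k - y} : Finset ℕ) := by
    intro x hx y hy hxy
    have hx' := Finset.mem_Icc.mp hx
    have hy' := Finset.mem_Icc.mp hy
    rw [Finset.disjoint_left]
    intro a ha ha'
    simp only [Finset.mem_insert, Finset.mem_singleton] at ha ha'
    omega
  rw [Finset.card_biUnion hpair]
  have hc2 : ∀ x ∈ Finset.Icc (3*s + P r (i-1) + 1) (3*s + P r i),
      ({x, k - x} : Finset ℕ).card = 2 := by
    intro x hx
    have hx' := Finset.mem_Icc.mp hx
    exact Finset.card_pair (by omega)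
  rw [Finset.sum_congr rfl hc2, Finset.sum_const, Nat.card_Icc, smul_eq_mul]
  have hstep : P r i = P r (i-1) + pc r i := P_step r hi'.1
  unfold pc at hstep
  split_ifs with h
  · rw [trip_card hko hm (q_pos r hi'.1 h) (hqt ▸ q_mono r hi'.2)]
    omega
  · rw [Finset.card_empty]
    omega

lemma D_sum (hko : k % 2 = 1) (hm : 3*s+1 ≤ k/2) (hqt : q r t = 2*s+1)
    (hPt : 2 * P r t + 6*s + 3 = k) (hi : i ∈ Finset.Icc 1 t) :
    (∑ a ∈ D k s r i, a) % k = 0 := by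
  have hi' := Finset.mem_Icc.mp hi
  have hub : P r i ≤ P r t := P_mono r hi'.2
  have hdisj : Disjoint (if r i % 2 = 1 then trip k s (q r i) else ∅)
      ((Finset.Icc (3*s + P r (i-1) + 1) (3*s + P r i)).biUnion fun x => ({x, k - x} : Finset ℕ)) := by
    split_ifs with h
    · apply (Finset.disjoint_biUnion_right _ _ _).mpr
      intro x hx
      have hx' := Finset.mem_Icc.mp hx
      exact trip_pair_disjoint hko hm (q_pos r hi'.1 h) (hqt ▸ q_mono r hi'.2) (by omega) (by omega)
    · simp
  have hpair : Set.PairwiseDisjoint ↑(Finset.Icc (3*s + P r (i-1) + 1) (3*s + P r i))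
      (fun x => ({x, k - x} : Finset ℕ)) := by
    intro x hx y hy hxy
    have hx' := Finset.mem_Icc.mp (Finset.mem_coe.mp hx)
    have hy' := Finset.mem_Icc.mp (Finset.mem_coe.mp hy)
    rw [Function.onFun, Finset.disjoint_left]
    intro a ha ha'
    simp only [Finset.mem_insert, Finset.mem_singleton] at ha ha'
    omega
  rw [D, Finset.sum_union hdisj, Finset.sum_biUnion hpair]
  have hps : ∀ x ∈ Finset.Icc (3*s + P r (i-1) + 1) (3*s + P r i),
      (∑ a ∈ ({x, k - x} : Finset ℕ), a) = k := by
    intro x hx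
    have hx' := Finset.mem_Icc.mp hx
    rw [Finset.sum_pair (by omega : x ≠ k - x)]
    omega
  rw [Finset.sum_congr rfl hps, Finset.sum_const, smul_eq_mul]
  rw [Nat.add_mul_mod_self_right]
  split_ifs with h
  · exact trip_sum hko hm (q_pos r hi'.1 h) (hqt ▸ q_mono r hi'.2)
  · simp

lemma D_disj (hko : k % 2 = 1) (hm : 3*s+1 ≤ k/2) (hqt : q r t = 2*s+1)
    (hPt : 2 * P r t + 6*s + 3 = k) (hi : i ∈ Finset.Icc 1 t) (hj : j ∈ Finset.Icc 1 t)
    (hne : i ≠ j) : Disjoint (D k s r i) (D k s r j) := by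
  have hi' := Finset.mem_Icc.mp hi
  have hj' := Finset.mem_Icc.mp hj
  have hubi : P r i ≤ P r t := P_mono r hi'.2
  have hubj : P r j ≤ P r t := P_mono r hj'.2
  have hsep : P r i ≤ P r (j-1) ∨ P r j ≤ P r (i-1) := by
    rcases Nat.lt_or_ge i j with h | h
    · exact Or.inl (P_mono r (by omega))
    · exact Or.inr (P_mono r (by omega))
  rw [D, D]
  apply Finset.disjoint_union_left.mpr
  constructor
  · apply Finset.disjoint_union_right.mpr
    constructor
    · split_ifs with h1 h2 h2
      · apply trip_disjoint hko hm (q_pos r hi'.1 h1) (hqt ▸ q_mono r hi'.2)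
          (q_pos r hj'.1 h2) (hqt ▸ q_mono r hj'.2)
        rcases Nat.lt_or_ge i j with h | h
        · exact Nat.ne_of_lt (q_lt r h h2)
        · exact Nat.ne_of_gt (q_lt r (by omega) h1)
      · simp
      · simp
      · simp
    · split_ifs with h1
      · apply (Finset.disjoint_biUnion_right _ _ _).mpr
        intro x hx
        have hx' := Finset.mem_Icc.mp hx
        exact trip_pair_disjoint hko hm (q_pos r hi'.1 h1) (hqt ▸ q_mono r hi'.2)
          (by omega) (by omega)
      · simp
  · apply Finset.disjoint_union_right.mpr
    constructor
    · split_ifs with h1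
      · apply (Finset.disjoint_biUnion_left _ _ _).mpr
        intro x hx
        have hx' := Finset.mem_Icc.mp hx
        exact (trip_pair_disjoint hko hm (q_pos r hj'.1 h1) (hqt ▸ q_mono r hj'.2)
          (by omega) (by omega)).symm
      · simp
    · rw [Finset.disjoint_left]
      intro a ha ha'
      simp only [Finset.mem_biUnion, Finset.mem_Icc, Finset.mem_insert,
        Finset.mem_singleton] at ha ha'
      obtain ⟨x, hx, hax⟩ := ha
      obtain ⟨y, hy, hay⟩ := ha'
      omega

end

end ZSP

/-- **Zero-sum partition, odd case.**
Let `k` be an odd positive integer written as `k = r 1 + r 2 + ⋯ + r t` with every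
`r i ≥ 2`. Then `{1, …, k}` can be partitioned into pairwise disjoint subsets
`D 1, …, D t` with `|D i| = r i` whose element sums are all `≡ 0 (mod k)`. -/
theorem zero_sum_partition_sizes_odd (k t : ℕ) (hk : 0 < k) (hko : Odd k)
    (r : ℕ → ℕ) (hr : ∀ i ∈ Finset.Icc 1 t, 2 ≤ r i)
    (hsum : k = ∑ i ∈ Finset.Icc 1 t, r i) :
    ∃ D : ℕ → Finset ℕ,
      (∀ i ∈ Finset.Icc 1 t, ∀ j ∈ Finset.Icc 1 t, i ≠ j → Disjoint (D i) (D j)) ∧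
      ((Finset.Icc 1 t).biUnion D = Finset.Icc 1 k) ∧
      (∀ i ∈ Finset.Icc 1 t, (D i).card = r i ∧ (∑ a ∈ D i, a) % k = 0) := by
  have hko' : k % 2 = 1 := Nat.odd_iff.mp hko
  obtain ⟨hq2, hk3q, hPt0⟩ := ZSP.key_counts r t k hr hsum
  set s := ZSP.q r t / 2 with hs
  have hqt : ZSP.q r t = 2*s+1 := by omega
  have hm : 3*s+1 ≤ k/2 := by omega
  have hPt : 2 * ZSP.P r t + 6*s + 3 = k := by omega
  refine ⟨ZSP.D k s r, ?_, ?_, ?_⟩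
  · intro i hi j hj hne
    exact ZSP.D_disj hko' hm hqt hPt hi hj hne
  · apply Finset.eq_of_subset_of_card_le
    · exact Finset.biUnion_subset.mpr (fun i hi => ZSP.D_subset hko' hm hqt hPt hi)
    · rw [Finset.card_biUnion (fun i hi j hj hne => ZSP.D_disj hko' hm hqt hPt hi hj hne)]
      have hc : ∑ i ∈ Finset.Icc 1 t, (ZSP.D k s r i).card = ∑ i ∈ Finset.Icc 1 t, r i :=
        Finset.sum_congr rfl (fun i hi => ZSP.D_card hko' hm hqt hPt (hr i hi) hi)
      rw [hc, Nat.card_Icc]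
      omega
  · intro i hi
    exact ⟨ZSP.D_card hko' hm hqt hPt (hr i hi) hi, ZSP.D_sum hko' hm hqt hPt hi⟩
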